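/- Let (X, Y) be a random pair with X ∈ M_{m,T}(ℝ), Y ∈ ℝ. Suppose E[(Y − E(Y|X))² | X] ≤ b₂² a.s., |E(Y|X)| ≤ b∞ a.s., and for two matrices A, A* we have |⟨X, A⟩| ≤ C and |⟨X, A*⟩| ≤ C almost surely. Let L = (Y − ⟨X,A⟩)² − (Y − ⟨X,A*⟩)². Then E[L²] ≤ 4(b₂² + (b∞ + C)²) · E[⟨X, A − A*⟩²]. -/

import Mathlib

open Matrix MeasureTheory

theorem stmt11 {m T : ℕ}
    {Ω : Type*} [MeasurableSpace Ω] (μ : Measure Ω) [IsProbabilityMeasure μ]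
    (X : Ω → Matrix (Fin m) (Fin T) ℝ) (hX : ∀ p q, Measurable fun ω => X ω p q)
    (Y : Ω → ℝ) (hY : MemLp Y 2 μ)
    (b₂ binf C : ℝ) (hb₂ : 0 < b₂) (hbinf : 0 < binf) (hC : 0 < C)
    (A Astar : Matrix (Fin m) (Fin T) ℝ)
    -- conditional variance bound: E[(Y - E(Y|X))² | X] ≤ b₂² a.s.
    (hcondvar : ∀ᵐ ω ∂μ,
      condExp (MeasurableSpace.comap X MeasurableSpace.pi) μ
        (fun ω' => (Y ω' - condExp (MeasurableSpace.comap X MeasurableSpace.pi) μ Y ω') ^ 2)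
        ω ≤ b₂ ^ 2)
    -- |E(Y|X)| ≤ b∞ a.s.
    (hcondbound : ∀ᵐ ω ∂μ,
      |condExp (MeasurableSpace.comap X MeasurableSpace.pi) μ Y ω| ≤ binf)
    (hA : ∀ᵐ ω ∂μ, |((X ω)ᵀ * A).trace| ≤ C)
    (hAstar : ∀ᵐ ω ∂μ, |((X ω)ᵀ * Astar).trace| ≤ C) :
    ∫ ω, ((Y ω - ((X ω)ᵀ * A).trace) ^ 2 - (Y ω - ((X ω)ᵀ * Astar).trace) ^ 2) ^ 2 ∂μ ≤
      4 * (b₂ ^ 2 + (binf + C) ^ 2) * ∫ ω, ((X ω)ᵀ * (A - Astar)).trace ^ 2 ∂μ := by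
  classical
  rename_i mΩ _
  letI : MeasurableSpace (Matrix (Fin m) (Fin T) ℝ) := MeasurableSpace.pi
  have hXm : Measurable X :=
    measurable_pi_lambda _ fun p => measurable_pi_lambda _ fun q => hX p q
  have hle : MeasurableSpace.comap X MeasurableSpace.pi ≤ ‹MeasurableSpace Ω› := hXm.comap_le
  set 𝓖 := MeasurableSpace.comap X MeasurableSpace.pi with h𝓖
  set g : Ω → ℝ := condExp 𝓖 μ Y with hg
  set a : Ω → ℝ := fun ω => ((X ω)ᵀ * A).trace with ha
  set b : Ω → ℝ := fun ω => ((X ω)ᵀ * Astar).trace with hb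
  set D : Ω → ℝ := fun ω => ((X ω)ᵀ * (A - Astar)).trace with hD
  set h : Ω → ℝ := fun ω => 2 * g ω - a ω - b ω with hh
  have hDab : ∀ ω, D ω = a ω - b ω := by
    intro ω
    simp [hD, ha, hb, Matrix.mul_sub, Matrix.trace_sub]
  -- measurability (w.r.t. 𝓖)
  have hXG : Measurable[𝓖] X := Measurable.of_comap_le le_rfl
  have htraceMeas : ∀ B : Matrix (Fin m) (Fin T) ℝ,
      Measurable fun M : Matrix (Fin m) (Fin T) ℝ => (Mᵀ * B).trace := by
    intro B
    have hrw : (fun M : Matrix (Fin m) (Fin T) ℝ => (Mᵀ * B).trace)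
        = fun M => ∑ j : Fin T, ∑ i : Fin m, M i j * B i j := by
      funext M
      simp [Matrix.trace, Matrix.mul_apply, Matrix.diag, Matrix.transpose_apply]
    rw [hrw]
    exact Finset.measurable_sum _ fun j _ => Finset.measurable_sum _ fun i _ =>
      (show Measurable fun M : Matrix (Fin m) (Fin T) ℝ => M i j from
        (measurable_pi_apply j).comp (measurable_pi_apply i)).mul measurable_const
  have haG : Measurable[𝓖] a := (htraceMeas A).comp hXG
  have hbG : Measurable[𝓖] b := (htraceMeas Astar).comp hXG
  have hDG : Measurable[𝓖] D := (htraceMeas (A - Astar)).comp hXG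
  have hgG : StronglyMeasurable[𝓖] g := stronglyMeasurable_condExp
  have hhG : StronglyMeasurable[𝓖] h :=
    ((stronglyMeasurable_const.mul hgG).sub haG.stronglyMeasurable).sub hbG.stronglyMeasurable
  have hD2G : StronglyMeasurable[𝓖] (fun ω => D ω ^ 2) := (hDG.pow_const 2).stronglyMeasurable
  have hD2hG : StronglyMeasurable[𝓖] (fun ω => D ω ^ 2 * h ω) := hD2G.mul hhG
  have hD2M : AEStronglyMeasurable (m := mΩ) (fun ω => D ω ^ 2) μ := (hD2G.mono hle).aestronglyMeasurable
  have hD2hM : AEStronglyMeasurable (m := mΩ) (fun ω => D ω ^ 2 * h ω) μ :=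
    (hD2hG.mono hle).aestronglyMeasurable
  have hD2h2M : AEStronglyMeasurable (m := mΩ) (fun ω => D ω ^ 2 * h ω ^ 2) μ :=
    ((hD2G.mul (hhG.mul hhG)).mono hle).aestronglyMeasurable.congr
      (Filter.Eventually.of_forall fun ω => by simp [Pi.mul_apply]; exact Or.inl (sq (h ω)).symm)
  have hgM : AEStronglyMeasurable (m := mΩ) g μ := (hgG.mono hle).aestronglyMeasurable
  -- bounds
  have hDbound : ∀ᵐ ω ∂μ, |D ω| ≤ 2 * C := by
    filter_upwards [hA, hAstar] with ω h1 h2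
    rw [hDab ω]
    calc |a ω - b ω| ≤ |a ω| + |b ω| := abs_sub _ _
      _ ≤ C + C := add_le_add h1 h2
      _ = 2 * C := by ring
  have hhbound : ∀ᵐ ω ∂μ, |h ω| ≤ 2 * (binf + C) := by
    filter_upwards [hA, hAstar, hcondbound] with ω h1 h2 h3
    calc |h ω| = |2 * g ω - a ω - b ω| := rfl
      _ ≤ |2 * g ω - a ω| + |b ω| := abs_sub _ _
      _ ≤ |2 * g ω| + |a ω| + |b ω| := by gcongr ?_ + _; exact abs_sub _ _
      _ = 2 * |g ω| + |a ω| + |b ω| := by rw [abs_mul]; norm_num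
      _ ≤ 2 * binf + C + C := by gcongr
      _ = 2 * (binf + C) := by ring
  have hD2bound : ∀ᵐ ω ∂μ, ‖D ω ^ 2‖ ≤ (2 * C) ^ 2 := by
    filter_upwards [hDbound] with ω hω
    rw [Real.norm_eq_abs, abs_pow]
    exact pow_le_pow_left₀ (abs_nonneg _) hω 2
  -- MemLp / integrability facts
  have hg2 : MemLp g 2 μ := MemLp.of_bound hgM binf
    (by filter_upwards [hcondbound] with ω hω using by simpa [Real.norm_eq_abs] using hω)
  have hW2 : MemLp (fun ω => Y ω - g ω) 2 μ := hY.sub hg2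
  have hWsq : Integrable (fun ω => (Y ω - g ω) ^ 2) μ := hW2.integrable_sq
  have hW1 : Integrable (fun ω => Y ω - g ω) μ := hW2.integrable one_le_two
  have hD2int : Integrable (fun ω => D ω ^ 2) μ :=
    memLp_one_iff_integrable.mp (MemLp.of_bound hD2M ((2 * C) ^ 2) hD2bound)
  -- term 1 : ∫ D² (Y-g)²
  have hf1int : Integrable (fun ω => D ω ^ 2 * (Y ω - g ω) ^ 2) μ :=
    Integrable.bdd_mul (c := (2 * C) ^ 2) hWsq hD2M hD2bound
  have hT1 : ∫ ω, D ω ^ 2 * (Y ω - g ω) ^ 2 ∂μ ≤ b₂ ^ 2 * ∫ ω, D ω ^ 2 ∂μ := by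
    have hf1int' : Integrable ((fun ω => D ω ^ 2) * fun ω' => (Y ω' - g ω') ^ 2) μ := hf1int
    have hpull : condExp 𝓖 μ ((fun ω => D ω ^ 2) * fun ω' => (Y ω' - g ω') ^ 2)
        =ᵐ[μ] (fun ω => D ω ^ 2) * condExp 𝓖 μ (fun ω' => (Y ω' - g ω') ^ 2) :=
      condExp_mul_of_stronglyMeasurable_left hD2G hf1int' hWsq
    have h1 : ∫ ω, D ω ^ 2 * (Y ω - g ω) ^ 2 ∂μ
        = ∫ ω, condExp 𝓖 μ ((fun ω => D ω ^ 2) * fun ω' => (Y ω' - g ω') ^ 2) ω ∂μ := by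
      rw [integral_condExp hle]
      exact integral_congr_ae (Filter.Eventually.of_forall fun ω => rfl)
    rw [h1]
    have hmono : ∀ᵐ ω ∂μ,
        condExp 𝓖 μ ((fun ω => D ω ^ 2) * fun ω' => (Y ω' - g ω') ^ 2) ω
          ≤ D ω ^ 2 * b₂ ^ 2 := by
      filter_upwards [hpull, hcondvar] with ω h1 h2
      rw [h1]
      exact mul_le_mul_of_nonneg_left h2 (sq_nonneg _)
    calc ∫ ω, condExp 𝓖 μ ((fun ω => D ω ^ 2) * fun ω' => (Y ω' - g ω') ^ 2) ω ∂μ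
        ≤ ∫ ω, D ω ^ 2 * b₂ ^ 2 ∂μ :=
          integral_mono_ae integrable_condExp (hD2int.mul_const _) hmono
      _ = b₂ ^ 2 * ∫ ω, D ω ^ 2 ∂μ := by
          rw [← integral_const_mul]
          exact integral_congr_ae (Filter.Eventually.of_forall fun ω => by ring)
  -- term 2 : ∫ D² h (Y-g) = 0
  have hD2hbound : ∀ᵐ ω ∂μ, ‖D ω ^ 2 * h ω‖ ≤ (2 * C) ^ 2 * (2 * (binf + C)) := by
    filter_upwards [hD2bound, hhbound] with ω h1 h2
    rw [Real.norm_eq_abs, abs_mul]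
    rw [Real.norm_eq_abs] at h1
    exact mul_le_mul h1 h2 (abs_nonneg _) (by positivity)
  have hf2int : Integrable (fun ω => D ω ^ 2 * h ω * (Y ω - g ω)) μ :=
    Integrable.bdd_mul hW1 hD2hM hD2hbound
  have hT2 : ∫ ω, D ω ^ 2 * h ω * (Y ω - g ω) ∂μ = 0 := by
    have hceg : condExp 𝓖 μ g = g :=
      condExp_of_stronglyMeasurable hle stronglyMeasurable_condExp integrable_condExp
    have hzero : condExp 𝓖 μ (fun ω => Y ω - g ω) =ᵐ[μ] 0 := by
      have hsub : condExp 𝓖 μ (Y - g) =ᵐ[μ] condExp 𝓖 μ Y - condExp 𝓖 μ g :=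
        condExp_sub (hY.integrable one_le_two) integrable_condExp 𝓖
      have heq : condExp 𝓖 μ (fun ω => Y ω - g ω) = condExp 𝓖 μ (Y - g) := rfl
      rw [heq]
      refine hsub.trans ?_
      rw [hceg, ← hg, sub_self]
    have hf2int' : Integrable ((fun ω => D ω ^ 2 * h ω) * fun ω => Y ω - g ω) μ := hf2int
    have hpull : condExp 𝓖 μ ((fun ω => D ω ^ 2 * h ω) * fun ω => Y ω - g ω)
        =ᵐ[μ] (fun ω => D ω ^ 2 * h ω) * condExp 𝓖 μ (fun ω => Y ω - g ω) :=
      condExp_mul_of_stronglyMeasurable_left hD2hG hf2int' hW1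
    have h1 : ∫ ω, D ω ^ 2 * h ω * (Y ω - g ω) ∂μ
        = ∫ ω, condExp 𝓖 μ ((fun ω => D ω ^ 2 * h ω) * fun ω => Y ω - g ω) ω ∂μ := by
      rw [integral_condExp hle]
      exact integral_congr_ae (Filter.Eventually.of_forall fun ω => rfl)
    rw [h1]
    have hz : ∀ᵐ ω ∂μ,
        condExp 𝓖 μ ((fun ω => D ω ^ 2 * h ω) * fun ω => Y ω - g ω) ω = 0 := by
      filter_upwards [hpull, hzero] with ω h1 h2
      rw [h1]
      simp only [Pi.mul_apply, h2, Pi.zero_apply, mul_zero]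
    rw [integral_congr_ae hz, integral_zero]
  -- term 3 : ∫ D² h²
  have hf3int : Integrable (fun ω => D ω ^ 2 * h ω ^ 2) μ := by
    refine memLp_one_iff_integrable.mp
      (MemLp.of_bound hD2h2M ((2 * C) ^ 2 * (2 * (binf + C)) ^ 2) ?_)
    filter_upwards [hDbound, hhbound] with ω h1 h2
    rw [Real.norm_eq_abs, abs_mul, abs_pow, abs_pow]
    exact mul_le_mul (pow_le_pow_left₀ (abs_nonneg _) h1 2)
      (pow_le_pow_left₀ (abs_nonneg _) h2 2) (by positivity) (by positivity)
  have hT3 : ∫ ω, D ω ^ 2 * h ω ^ 2 ∂μ ≤ 4 * (binf + C) ^ 2 * ∫ ω, D ω ^ 2 ∂μ := by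
    have hmono : ∀ᵐ ω ∂μ, D ω ^ 2 * h ω ^ 2 ≤ D ω ^ 2 * (4 * (binf + C) ^ 2) := by
      filter_upwards [hhbound] with ω h2
      have hb : h ω ^ 2 ≤ 4 * (binf + C) ^ 2 := by
        nlinarith [abs_nonneg (h ω), sq_abs (h ω)]
      exact mul_le_mul_of_nonneg_left hb (sq_nonneg _)
    calc ∫ ω, D ω ^ 2 * h ω ^ 2 ∂μ ≤ ∫ ω, D ω ^ 2 * (4 * (binf + C) ^ 2) ∂μ :=
          integral_mono_ae hf3int (hD2int.mul_const _) hmono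
      _ = 4 * (binf + C) ^ 2 * ∫ ω, D ω ^ 2 ∂μ := by
          rw [← integral_const_mul]
          exact integral_congr_ae (Filter.Eventually.of_forall fun ω => by ring)
  -- combine
  have heq : ∀ ω, ((Y ω - a ω) ^ 2 - (Y ω - b ω) ^ 2) ^ 2
      = 4 * (D ω ^ 2 * (Y ω - g ω) ^ 2) + 4 * (D ω ^ 2 * h ω * (Y ω - g ω))
        + D ω ^ 2 * h ω ^ 2 := by
    intro ω
    rw [hDab ω]
    show _ = _ + 4 * ((a ω - b ω) ^ 2 * (2 * g ω - a ω - b ω) * _) + _ * (2 * g ω - a ω - b ω) ^ 2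
    ring
  have hsplit : ∫ ω, ((Y ω - a ω) ^ 2 - (Y ω - b ω) ^ 2) ^ 2 ∂μ
      = 4 * ∫ ω, D ω ^ 2 * (Y ω - g ω) ^ 2 ∂μ
        + 4 * ∫ ω, D ω ^ 2 * h ω * (Y ω - g ω) ∂μ
        + ∫ ω, D ω ^ 2 * h ω ^ 2 ∂μ := by
    have e0 : ∫ ω, ((Y ω - a ω) ^ 2 - (Y ω - b ω) ^ 2) ^ 2 ∂μ
        = ∫ ω, (4 * (D ω ^ 2 * (Y ω - g ω) ^ 2) + 4 * (D ω ^ 2 * h ω * (Y ω - g ω))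
            + D ω ^ 2 * h ω ^ 2) ∂μ :=
      integral_congr_ae (Filter.Eventually.of_forall heq)
    have e1 : ∫ ω, (4 * (D ω ^ 2 * (Y ω - g ω) ^ 2) + 4 * (D ω ^ 2 * h ω * (Y ω - g ω))
          + D ω ^ 2 * h ω ^ 2) ∂μ
        = ∫ ω, (4 * (D ω ^ 2 * (Y ω - g ω) ^ 2) + 4 * (D ω ^ 2 * h ω * (Y ω - g ω))) ∂μ
          + ∫ ω, D ω ^ 2 * h ω ^ 2 ∂μ :=
      integral_add ((hf1int.const_mul 4).add (hf2int.const_mul 4)) hf3int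
    have e2 : ∫ ω, (4 * (D ω ^ 2 * (Y ω - g ω) ^ 2) + 4 * (D ω ^ 2 * h ω * (Y ω - g ω))) ∂μ
        = ∫ ω, 4 * (D ω ^ 2 * (Y ω - g ω) ^ 2) ∂μ
          + ∫ ω, 4 * (D ω ^ 2 * h ω * (Y ω - g ω)) ∂μ :=
      integral_add (hf1int.const_mul 4) (hf2int.const_mul 4)
    rw [e0, e1, e2, integral_const_mul, integral_const_mul]
  calc ∫ ω, ((Y ω - a ω) ^ 2 - (Y ω - b ω) ^ 2) ^ 2 ∂μ
      = 4 * ∫ ω, D ω ^ 2 * (Y ω - g ω) ^ 2 ∂μ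
        + 4 * ∫ ω, D ω ^ 2 * h ω * (Y ω - g ω) ∂μ
        + ∫ ω, D ω ^ 2 * h ω ^ 2 ∂μ := hsplit
    _ ≤ 4 * (b₂ ^ 2 * ∫ ω, D ω ^ 2 ∂μ) + 4 * 0
        + 4 * (binf + C) ^ 2 * ∫ ω, D ω ^ 2 ∂μ := by
        refine add_le_add (add_le_add ?_ ?_) hT3
        · exact mul_le_mul_of_nonneg_left hT1 (by norm_num)
        · rw [hT2]
    _ = 4 * (b₂ ^ 2 + (binf + C) ^ 2) * ∫ ω, D ω ^ 2 ∂μ := by ring
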